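/- Let x_j, s_j : [0,∞) satisfy the Calogero–Moser spin system ṡ_j = 2i Σ_{k≠j} (s_j × s_k)/(x_j - x_k)², ẍ_j = -4 Σ_{k≠j} (s_j·s_k)/(x_j - x_k)³, and assume there are constants η > 0, 𝒮 > 0 and t₀ with |x_j(t) - x_k(t)| ≥ η t and |s_j(t)| ≤ 𝒮 for all t > t₀ and j ≠ k. Then: (a) each ẋ_j(t) converges to some v_j ∈ ℂ with |ẋ_j(t) - v_j| ≤ 4(N-1)𝒮² / (η³ t²); (b) each x_j(t) - v_j t converges; (c) each s_j(t) converges, with |s_j(t₂) - s_j(t₁)| ≤ 2(N-1)𝒮²/(η² t₁) for t₂ ≥ t₁ > t₀. -/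

import Mathlib

open Filter Set

section helpers

lemma helperA {E : Type*} [NormedAddCommGroup E] [NormedSpace ℝ E]
    {F F' : ℝ → E} {B B' : ℝ → ℝ} {a b : ℝ} (hab : a ≤ b)
    (hF : ∀ t ∈ Icc a b, HasDerivAt F (F' t) t)
    (hB : ∀ t ∈ Icc a b, HasDerivAt B (B' t) t)
    (bound : ∀ t ∈ Ico a b, ‖F' t‖ ≤ B' t) :
    ‖F b - F a‖ ≤ B b - B a := by
  have h := image_norm_le_of_norm_deriv_right_le_deriv_boundary'
    (f := fun t => F t - F a) (f' := F') (a := a) (b := b)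
    (B := fun t => B t - B a) (B' := B')
    (fun t ht => ((hF t ht).sub_const (F a)).continuousAt.continuousWithinAt)
    (fun t ht => ((hF t (Ico_subset_Icc_self ht)).sub_const (F a)).hasDerivWithinAt.mono
      (by intro u hu; exact hu))
    (by simp)
    (fun t ht => ((hB t ht).sub_const (B a)).continuousAt.continuousWithinAt)
    (fun t ht => ((hB t (Ico_subset_Icc_self ht)).sub_const (B a)).hasDerivWithinAt.mono
      (by intro u hu; exact hu))
    bound
  simpa using h (right_mem_Icc.2 hab)

lemma helperCauchy {E : Type*} [NormedAddCommGroup E] [CompleteSpace E]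
    {f : ℝ → E} {C t₀ : ℝ} (hC : 0 ≤ C)
    (h : ∀ t₁ t₂, t₀ < t₁ → t₁ ≤ t₂ → ‖f t₂ - f t₁‖ ≤ C / t₁) :
    ∃ l, Filter.Tendsto f atTop (nhds l) := by
  apply cauchySeq_tendsto_of_complete
  rw [Metric.cauchySeq_iff']
  intro ε hε
  refine ⟨max (t₀ + 1) (C / ε + 1), fun n hn => ?_⟩
  have hN0 : t₀ < max (t₀ + 1) (C / ε + 1) := lt_of_lt_of_le (by linarith) (le_max_left _ _)
  have h1 : C / ε + 1 ≤ max (t₀ + 1) (C / ε + 1) := le_max_right _ _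
  have hpos : (0:ℝ) < C / ε + 1 := by positivity
  rw [dist_eq_norm]
  calc ‖f n - f (max (t₀ + 1) (C / ε + 1))‖ ≤ C / max (t₀ + 1) (C / ε + 1) := h _ _ hN0 hn
    _ ≤ C / (C / ε + 1) := div_le_div_of_nonneg_left hC hpos h1
    _ < ε := by
        rw [div_lt_iff₀ hpos]
        have : C / ε * ε = C := div_mul_cancel₀ _ (ne_of_gt hε)
        nlinarith

lemma cross_sq_le (a b : Fin 3 → ℂ) :
    (∑ i, ‖(crossProduct a) b i‖ ^ 2) ≤
      (∑ i, ‖a i‖ ^ 2) * (∑ i, ‖b i‖ ^ 2) := by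
  have key : (∑ i, Complex.normSq ((crossProduct a) b i)) +
      Complex.normSq (∑ i, a i * (starRingEnd ℂ) (b i)) =
      (∑ i, Complex.normSq (a i)) * (∑ i, Complex.normSq (b i)) := by
    simp only [cross_apply, Fin.sum_univ_three, Complex.normSq_apply,
      Matrix.cons_val_zero, Matrix.cons_val_one, Matrix.head_cons,
      Matrix.cons_val_two, Matrix.tail_cons,
      Complex.sub_re, Complex.sub_im, Complex.add_re, Complex.add_im,
      Complex.mul_re, Complex.mul_im, Complex.conj_re, Complex.conj_im]
    ring
  simp only [← Complex.sq_norm] at key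
  nlinarith [sq_nonneg ‖∑ i, a i * (starRingEnd ℂ) (b i)‖]

lemma dot_le (a b : Fin 3 → ℂ) :
    ‖∑ i, a i * b i‖ ≤
      Real.sqrt (∑ i, ‖a i‖ ^ 2) * Real.sqrt (∑ i, ‖b i‖ ^ 2) := by
  have h1 : ‖∑ i, a i * b i‖ ≤ ∑ i, ‖a i‖ * ‖b i‖ := by
    refine (norm_sum_le _ _).trans (le_of_eq ?_)
    exact Finset.sum_congr rfl fun i _ => norm_mul _ _
  refine h1.trans ?_
  rw [← Real.sqrt_mul (by positivity), Real.le_sqrt (by positivity) (by positivity)]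
  exact Finset.sum_mul_sq_le_sq_mul_sq Finset.univ _ _

noncomputable def eE : (Fin 3 → ℂ) ≃L[ℝ] EuclideanSpace ℂ (Fin 3) :=
  { (EuclideanSpace.equiv (Fin 3) ℂ).symm.toLinearEquiv.restrictScalars ℝ with
    continuous_toFun := (EuclideanSpace.equiv (Fin 3) ℂ).symm.continuous
    continuous_invFun := (EuclideanSpace.equiv (Fin 3) ℂ).continuous }

lemma eE_norm (v : Fin 3 → ℂ) : ‖eE v‖ = Real.sqrt (∑ i, ‖v i‖ ^ 2) := by
  rw [EuclideanSpace.norm_eq]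
  simp [eE]

lemma eE_hasDerivAt {f : ℝ → (Fin 3 → ℂ)} {d : Fin 3 → ℂ} {t : ℝ}
    (h : HasDerivAt f d t) : HasDerivAt (fun u => eE (f u)) (eE d) t :=
  eE.toContinuousLinearMap.hasFDerivAt.comp_hasDerivAt t h

lemma eE_smul (c : ℂ) (v : Fin 3 → ℂ) : eE (c • v) = c • eE v := rfl

lemma cross_norm_le (a b : Fin 3 → ℂ) :
    ‖eE ((crossProduct a) b)‖ ≤
      Real.sqrt (∑ i, ‖a i‖ ^ 2) * Real.sqrt (∑ i, ‖b i‖ ^ 2) := by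
  rw [eE_norm, ← Real.sqrt_mul (by positivity)]
  exact Real.sqrt_le_sqrt (cross_sq_le a b)

lemma hasDerivAt_neg_div (C : ℝ) {u : ℝ} (hu : u ≠ 0) :
    HasDerivAt (fun t : ℝ => -(C / t)) (C / u ^ 2) u := by
  have h := ((hasDerivAt_inv hu).const_mul C).neg
  have heq : (fun t : ℝ => -(C / t)) = fun t => -(C * t⁻¹) := by
    funext t; rw [div_eq_mul_inv]
  rw [heq]
  refine h.congr_deriv ?_
  field_simp

lemma hasDerivAt_neg_div_sq (C : ℝ) {u : ℝ} (hu : u ≠ 0) :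
    HasDerivAt (fun t : ℝ => -(C / t ^ 2)) (2 * C / u ^ 3) u := by
  have h := (((hasDerivAt_pow 2 u).inv (pow_ne_zero 2 hu)).const_mul C).neg
  have heq : (fun t : ℝ => -(C / t ^ 2)) = fun t => -(C * (t ^ 2)⁻¹) := by
    funext t; rw [div_eq_mul_inv]
  rw [heq]
  refine h.congr_deriv ?_
  field_simp
  ring

end helpers

/-- (C₁) ⇒ (C₃): for the spin Calogero–Moser system, if the poles separate at least linearly
and the spins stay bounded, then the speeds converge with rate `4(N-1)𝒮²/(η³t²)`, the
translated poles converge, and the spins converge with the Cauchy estimate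
`2(N-1)𝒮²/(η²t₁)`. -/
theorem scattering_behavior_of_C1
    (N : ℕ) (t₀ η S : ℝ) (ht₀ : 0 < t₀) (hη : 0 < η) (hS : 0 < S)
    (x x' : Fin N → ℝ → ℂ) (s : Fin N → ℝ → (Fin 3 → ℂ))
    (hx : ∀ j t, HasDerivAt (x j) (x' j t) t)
    (hspinEq : ∀ j t, HasDerivAt (s j)
      (∑ k ∈ Finset.univ.erase j,
        ((2 * Complex.I) / (x j t - x k t) ^ 2) • (crossProduct (s j t) (s k t))) t)
    (hpoleEq : ∀ j t, HasDerivAt (x' j)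
      (-4 * ∑ k ∈ Finset.univ.erase j,
        (∑ i, s j t i * s k t i) / (x j t - x k t) ^ 3) t)
    (hsep : ∀ t, t₀ < t → ∀ j k, j ≠ k → η * t ≤ ‖x j t - x k t‖)
    (hbd : ∀ t, t₀ < t → ∀ j,
      Real.sqrt (∑ i, ‖s j t i‖ ^ 2) ≤ S) :
    ∃ v : Fin N → ℂ, ∀ j,
      Tendsto (x' j) atTop (nhds (v j)) ∧
      (∀ t, t₀ < t → ‖x' j t - v j‖ ≤
        4 * ((N : ℝ) - 1) * S ^ 2 / (η ^ 3 * t ^ 2)) ∧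
      (∃ l : ℂ, Tendsto (fun t => x j t - v j * (t : ℂ)) atTop (nhds l)) ∧
      (∃ sInf : Fin 3 → ℂ, Tendsto (s j) atTop (nhds sInf)) ∧
      (∀ t₁ t₂, t₀ < t₁ → t₁ ≤ t₂ →
        Real.sqrt (∑ i, ‖s j t₂ i - s j t₁ i‖ ^ 2) ≤
          2 * ((N : ℝ) - 1) * S ^ 2 / (η ^ 2 * t₁)) := by
  classical
  have main : ∀ j : Fin N, ∃ vj : ℂ,
      Tendsto (x' j) atTop (nhds vj) ∧
      (∀ t, t₀ < t → ‖x' j t - vj‖ ≤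
        4 * ((N : ℝ) - 1) * S ^ 2 / (η ^ 3 * t ^ 2)) ∧
      (∃ l : ℂ, Tendsto (fun t => x j t - vj * (t : ℂ)) atTop (nhds l)) ∧
      (∃ sInf : Fin 3 → ℂ, Tendsto (s j) atTop (nhds sInf)) ∧
      (∀ t₁ t₂, t₀ < t₁ → t₁ ≤ t₂ →
        Real.sqrt (∑ i, ‖s j t₂ i - s j t₁ i‖ ^ 2) ≤
          2 * ((N : ℝ) - 1) * S ^ 2 / (η ^ 2 * t₁)) := by
    intro j
    have hNpos : 0 < N := j.pos
    have hcard : ((Finset.univ.erase j).card : ℝ) = (N : ℝ) - 1 := by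
      rw [Finset.card_erase_of_mem (Finset.mem_univ j), Finset.card_univ, Fintype.card_fin,
        Nat.cast_sub hNpos, Nat.cast_one]
    have hN1 : (0:ℝ) ≤ (N : ℝ) - 1 := by
      rw [← hcard]; positivity
    set Cs : ℝ := 2 * ((N : ℝ) - 1) * S ^ 2 / η ^ 2 with hCs
    set K : ℝ := 4 * ((N : ℝ) - 1) * S ^ 2 / η ^ 3 with hK
    have hCs0 : 0 ≤ Cs := by rw [hCs]; positivity
    have hK0 : 0 ≤ K := by rw [hK]; positivity
    -- derivative bound for the spins
    have hsderiv : ∀ t, t₀ < t →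
        ‖eE (∑ k ∈ Finset.univ.erase j,
          ((2 * Complex.I) / (x j t - x k t) ^ 2) • (crossProduct (s j t) (s k t)))‖
          ≤ Cs / t ^ 2 := by
      intro t ht
      have htpos : 0 < t := ht₀.trans ht
      rw [map_sum]
      refine (norm_sum_le _ _).trans ?_
      have hterm : ∀ k ∈ Finset.univ.erase j,
          ‖eE (((2 * Complex.I) / (x j t - x k t) ^ 2) • (crossProduct (s j t) (s k t)))‖
            ≤ 2 * S ^ 2 / (η ^ 2 * t ^ 2) := by
        intro k hk
        have hkj : k ≠ j := Finset.ne_of_mem_erase hk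
        have hd := hsep t ht j k (Ne.symm hkj)
        have hηt : (0:ℝ) < η * t := by positivity
        rw [eE_smul, norm_smul]
        have h1 : ‖(2 * Complex.I) / (x j t - x k t) ^ 2‖ ≤ 2 / (η ^ 2 * t ^ 2) := by
          rw [norm_div, norm_pow, norm_mul, Complex.norm_two,
            Complex.norm_I, mul_one]
          have heq : η ^ 2 * t ^ 2 = (η * t) ^ 2 := by ring
          rw [heq]
          exact div_le_div_of_nonneg_left (by norm_num) (by positivity)
            (pow_le_pow_left₀ hηt.le hd 2)
        have h2 : ‖eE ((crossProduct (s j t)) (s k t))‖ ≤ S * S :=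
          (cross_norm_le _ _).trans
            (mul_le_mul (hbd t ht j) (hbd t ht k) (Real.sqrt_nonneg _) hS.le)
        calc ‖(2 * Complex.I) / (x j t - x k t) ^ 2‖ * ‖eE ((crossProduct (s j t)) (s k t))‖
            ≤ (2 / (η ^ 2 * t ^ 2)) * (S * S) :=
              mul_le_mul h1 h2 (norm_nonneg _) (by positivity)
          _ = 2 * S ^ 2 / (η ^ 2 * t ^ 2) := by ring
      refine (Finset.sum_le_card_nsmul _ _ _ hterm).trans ?_
      rw [nsmul_eq_mul, hcard]
      apply le_of_eq
      rw [hCs]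
      field_simp
    -- derivative bound for the velocities
    have hxderiv : ∀ t, t₀ < t →
        ‖(-4 : ℂ) * ∑ k ∈ Finset.univ.erase j,
          (∑ i, s j t i * s k t i) / (x j t - x k t) ^ 3‖ ≤ K / t ^ 3 := by
      intro t ht
      have htpos : 0 < t := ht₀.trans ht
      rw [norm_mul]
      have h4 : ‖(-4 : ℂ)‖ = 4 := by
        rw [norm_neg]; norm_num
      rw [h4]
      have hterm : ∀ k ∈ Finset.univ.erase j,
          ‖(∑ i, s j t i * s k t i) / (x j t - x k t) ^ 3‖
            ≤ S ^ 2 / (η ^ 3 * t ^ 3) := by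
        intro k hk
        have hkj : k ≠ j := Finset.ne_of_mem_erase hk
        have hd := hsep t ht j k (Ne.symm hkj)
        have hηt : (0:ℝ) < η * t := by positivity
        rw [norm_div, norm_pow]
        have h1 : ‖∑ i, s j t i * s k t i‖ ≤ S ^ 2 := by
          refine (dot_le _ _).trans ?_
          have := mul_le_mul (hbd t ht j) (hbd t ht k) (Real.sqrt_nonneg _) hS.le
          nlinarith
        have heq : η ^ 3 * t ^ 3 = (η * t) ^ 3 := by ring
        rw [heq]
        exact div_le_div₀ (by positivity) h1 (by positivity) (pow_le_pow_left₀ hηt.le hd 3)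
      have hsum : ‖∑ k ∈ Finset.univ.erase j,
          (∑ i, s j t i * s k t i) / (x j t - x k t) ^ 3‖
          ≤ ((N:ℝ) - 1) * (S ^ 2 / (η ^ 3 * t ^ 3)) := by
        refine (norm_sum_le _ _).trans ?_
        refine (Finset.sum_le_card_nsmul _ _ _ hterm).trans (le_of_eq ?_)
        rw [nsmul_eq_mul, hcard]
      calc 4 * ‖∑ k ∈ Finset.univ.erase j,
            (∑ i, s j t i * s k t i) / (x j t - x k t) ^ 3‖
          ≤ 4 * (((N:ℝ) - 1) * (S ^ 2 / (η ^ 3 * t ^ 3))) := by linarith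
        _ = K / t ^ 3 := by rw [hK]; field_simp
    -- increment estimate for the spins
    have hsinc : ∀ t₁ t₂, t₀ < t₁ → t₁ ≤ t₂ →
        ‖eE (s j t₂) - eE (s j t₁)‖ ≤ Cs / t₁ := by
      intro t₁ t₂ h1 h12
      have h1pos : 0 < t₁ := ht₀.trans h1
      have h2pos : 0 < t₂ := lt_of_lt_of_le h1pos h12
      have h := helperA (F := fun u => eE (s j u))
        (F' := fun u => eE (∑ k ∈ Finset.univ.erase j,
          ((2 * Complex.I) / (x j u - x k u) ^ 2) • (crossProduct (s j u) (s k u))))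
        (B := fun u => -(Cs / u)) (B' := fun u => Cs / u ^ 2) h12
        (fun u _ => eE_hasDerivAt (hspinEq j u))
        (fun u hu => hasDerivAt_neg_div Cs (ne_of_gt (lt_of_lt_of_le h1pos hu.1)))
        (fun u hu => hsderiv u (lt_of_lt_of_le h1 hu.1))
      have h2 : 0 ≤ Cs / t₂ := by positivity
      linarith
    -- increment estimate for the velocities
    have hxinc : ∀ t₁ t₂, t₀ < t₁ → t₁ ≤ t₂ →
        ‖x' j t₂ - x' j t₁‖ ≤ K / 2 / t₁ ^ 2 - K / 2 / t₂ ^ 2 := by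
      intro t₁ t₂ h1 h12
      have h1pos : 0 < t₁ := ht₀.trans h1
      have h := helperA (F := x' j)
        (F' := fun u => (-4 : ℂ) * ∑ k ∈ Finset.univ.erase j,
          (∑ i, s j u i * s k u i) / (x j u - x k u) ^ 3)
        (B := fun u => -(K / 2 / u ^ 2)) (B' := fun u => 2 * (K / 2) / u ^ 3) h12
        (fun u _ => by simpa using hpoleEq j u)
        (fun u hu => hasDerivAt_neg_div_sq (K / 2) (ne_of_gt (lt_of_lt_of_le h1pos hu.1)))
        (fun u hu => (hxderiv u (lt_of_lt_of_le h1 hu.1)).trans (le_of_eq (by ring)))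
      linarith
    -- convergence of the velocities
    have hx2 : ∀ t₁ t₂, max t₀ 1 < t₁ → t₁ ≤ t₂ → ‖x' j t₂ - x' j t₁‖ ≤ K / 2 / t₁ := by
      intro t₁ t₂ h1 h12
      have ha : t₀ < t₁ := lt_of_le_of_lt (le_max_left _ _) h1
      have hb : 1 < t₁ := lt_of_le_of_lt (le_max_right _ _) h1
      have h1pos : 0 < t₁ := ht₀.trans ha
      have h2pos : 0 < t₂ := lt_of_lt_of_le h1pos h12
      refine (hxinc t₁ t₂ ha h12).trans ?_
      have htw : K / 2 / t₁ ^ 2 ≤ K / 2 / t₁ := by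
        apply div_le_div_of_nonneg_left (by positivity) h1pos
        nlinarith
      have : 0 ≤ K / 2 / t₂ ^ 2 := by positivity
      linarith
    obtain ⟨vj, hvj⟩ := helperCauchy (f := x' j) (by positivity : (0:ℝ) ≤ K / 2) hx2
    -- the quantitative bound on the velocity
    have hvbound : ∀ t, t₀ < t → ‖x' j t - vj‖ ≤
        4 * ((N : ℝ) - 1) * S ^ 2 / (η ^ 3 * t ^ 2) := by
      intro t ht
      have htpos : 0 < t := ht₀.trans ht
      have ht2 : Tendsto (fun u => ‖x' j u - x' j t‖) atTop (nhds ‖vj - x' j t‖) :=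
        (continuous_norm.tendsto _).comp (hvj.sub_const (x' j t))
      have hev : ∀ᶠ u in atTop, ‖x' j u - x' j t‖ ≤ K / 2 / t ^ 2 := by
        filter_upwards [eventually_gt_atTop t] with u hu
        have h := hxinc t u ht hu.le
        have hupos : 0 < u := htpos.trans hu
        have : 0 ≤ K / 2 / u ^ 2 := by positivity
        linarith
      have hfin : ‖vj - x' j t‖ ≤ K / 2 / t ^ 2 := le_of_tendsto ht2 hev
      calc ‖x' j t - vj‖ = ‖vj - x' j t‖ := by
            rw [norm_sub_rev]
        _ ≤ K / 2 / t ^ 2 := hfin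
        _ ≤ K / t ^ 2 := by
            apply div_le_div_of_nonneg_right ?_ (by positivity)
            linarith
        _ = 4 * ((N : ℝ) - 1) * S ^ 2 / (η ^ 3 * t ^ 2) := by rw [hK, div_div]
    -- translated poles converge
    have hg : ∀ u : ℝ, HasDerivAt (fun w : ℝ => x j w - vj * (w:ℂ)) (x' j u - vj) u := by
      intro u
      have h1 : HasDerivAt (fun w : ℝ => ((w:ℝ):ℂ)) 1 u := by
        simpa using (hasDerivAt_id u).ofReal_comp
      exact (hx j u).sub (by simpa using h1.const_mul vj)
    have hginc : ∀ t₁ t₂, t₀ < t₁ → t₁ ≤ t₂ →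
        ‖(x j t₂ - vj * (t₂:ℂ)) - (x j t₁ - vj * (t₁:ℂ))‖ ≤ K / t₁ := by
      intro t₁ t₂ h1 h12
      have h1pos : 0 < t₁ := ht₀.trans h1
      have h2pos : 0 < t₂ := lt_of_lt_of_le h1pos h12
      have h := helperA (F := fun w : ℝ => x j w - vj * (w:ℂ))
        (F' := fun u => x' j u - vj)
        (B := fun u => -(K / u)) (B' := fun u => K / u ^ 2) h12
        (fun u _ => hg u)
        (fun u hu => hasDerivAt_neg_div K (ne_of_gt (lt_of_lt_of_le h1pos hu.1)))
        (fun u hu => by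
          refine (hvbound u (lt_of_lt_of_le h1 hu.1)).trans (le_of_eq ?_)
          show _ = K / u ^ 2
          rw [hK, div_div])
      have h2 : 0 ≤ K / t₂ := by positivity
      linarith
    obtain ⟨l, hl⟩ := helperCauchy (f := fun w : ℝ => x j w - vj * (w:ℂ)) hK0 hginc
    -- spins converge
    obtain ⟨L, hL⟩ := helperCauchy (f := fun u => eE (s j u)) hCs0 hsinc
    have hstend : Tendsto (s j) atTop (nhds (eE.symm L)) := by
      have h := (eE.symm.continuous.tendsto L).comp hL
      simpa [Function.comp_def] using h
    refine ⟨vj, hvj, hvbound, ⟨l, hl⟩, ⟨eE.symm L, hstend⟩, ?_⟩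
    intro t₁ t₂ h1 h12
    have h := hsinc t₁ t₂ h1 h12
    have heq : ‖eE (s j t₂) - eE (s j t₁)‖ =
        Real.sqrt (∑ i, ‖s j t₂ i - s j t₁ i‖ ^ 2) := by
      rw [← map_sub, eE_norm]
      simp [Pi.sub_apply]
    rw [← heq]
    refine h.trans (le_of_eq ?_)
    rw [hCs, div_div]
  choose v hv using main
  exact ⟨v, hv⟩
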